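/- Let Z = {z_1 ≥ z_2 ≥ … ≥ z_m} and Z' = {z'_1 ≥ … ≥ z'_m} be multisets of nonnegative integers with equal sums, in each of which no entry is repeated more than twice. Suppose Z ⊴ Z' (dominance of partial sums), Z ≠ Z', and Z, Z' are adjacent with respect to ⊴ among such multisets (i.e., any such multiset Z'' with Z ⊴ Z'' ⊴ Z' equals Z or Z'). Then there exist indices 1 ≤ k < l ≤ m with z'_k = z_k + 1, z'_l = z_l − 1, and z'_i = z_i for all i ≠ k, l. -/

import Mathlib

/-- Decreasing enumeration of a multiset of natural numbers. -/
def dsort (M : Multiset ℕ) : List ℕ := (M.sort (· ≤ ·)).reverse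

/-- Dominance order on multisets of naturals (of the same size and sum):
partial sums of the decreasing enumerations. -/
def MDom (M M' : Multiset ℕ) : Prop :=
  ∀ d, ((dsort M).take d).sum ≤ ((dsort M').take d).sum

/-- No entry is repeated more than twice. -/
def AtMostTwice (M : Multiset ℕ) : Prop := ∀ v, M.count v ≤ 2

lemma getD_set_self {L : List ℕ} {i : ℕ} (h : i < L.length) (a : ℕ) :
    (L.set i a).getD i 0 = a := by
  rw [List.getD_eq_getElem _ _ (by simpa using h), List.getElem_set]
  simp

lemma getD_set_ne {L : List ℕ} {i j : ℕ} (h : i ≠ j) (a : ℕ) :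
    (L.set i a).getD j 0 = L.getD j 0 := by
  by_cases hj : j < L.length
  · rw [List.getD_eq_getElem _ _ (by simpa using hj), List.getD_eq_getElem _ _ hj,
      List.getElem_set, if_neg h]
  · rw [List.getD_eq_default _ _ (by simpa using Nat.le_of_not_lt hj),
      List.getD_eq_default _ _ (Nat.le_of_not_lt hj)]

lemma sum_take_succ_getD (L : List ℕ) (i : ℕ) (h : i < L.length) :
    (L.take (i+1)).sum = (L.take i).sum + L.getD i 0 := by
  rw [List.getD_eq_getElem _ _ h]; exact List.sum_take_succ _ _ h

lemma sorted_ge_getD {L : List ℕ} (hs : L.Pairwise (· ≥ ·)) {i j : ℕ}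
    (hij : i ≤ j) (hj : j < L.length) : L.getD j 0 ≤ L.getD i 0 := by
  rcases eq_or_lt_of_le hij with rfl | h
  · exact le_refl _
  · rw [List.getD_eq_getElem _ _ hj, List.getD_eq_getElem _ _ (lt_trans h hj)]
    exact List.pairwise_iff_getElem.mp hs i j _ _ h

lemma sorted_ge_of_getD {L : List ℕ} 
    (h : ∀ i j, i < j → j < L.length → L.getD j 0 ≤ L.getD i 0) : L.Pairwise (· ≥ ·) := by
  rw [List.pairwise_iff_getElem]
  intro i j hi hj hij
  have := h i j hij hj
  rwa [List.getD_eq_getElem _ _ hj, List.getD_eq_getElem _ _ hi] at this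

lemma count_set_getD (L : List ℕ) : ∀ (i : ℕ), i < L.length → ∀ (a v : ℕ),
    (L.set i a).count v + (if L.getD i 0 = v then 1 else 0)
      = L.count v + (if a = v then 1 else 0) := by
  induction L with
  | nil => intro i h; simp at h
  | cons x t ih =>
    intro i h a v
    cases i with
    | zero => simp [List.count_cons]; split_ifs <;> omega
    | succ n =>
      have hn : n < t.length := by simpa using h
      have := ih n hn a v
      simp only [List.set_cons_succ, List.count_cons, List.getD_cons_succ]
      split_ifs at this ⊢ <;> omega

lemma take_set_ge (L : List ℕ) : ∀ (i d : ℕ), d ≤ i → ∀ a, (L.set i a).take d = L.take d := by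
  induction L with
  | nil => intro i d h a; simp
  | cons x t ih =>
    intro i d h a
    cases i with
    | zero => interval_cases d <;> simp
    | succ n =>
      cases d with
      | zero => simp
      | succ e => simp only [List.set_cons_succ, List.take_succ_cons, ih n e (by omega)]

lemma sum_take_set_lt (L : List ℕ) : ∀ (i : ℕ), i < L.length → ∀ d, i < d → ∀ a,
    ((L.set i a).take d).sum + L.getD i 0 = (L.take d).sum + a := by
  induction L with
  | nil => intro i h; simp at h
  | cons x t ih =>
    intro i h d hd a
    cases i with
    | zero =>
      obtain ⟨e, rfl⟩ : ∃ e, d = e + 1 := ⟨d - 1, by omega⟩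
      simp [List.take_succ_cons]; omega
    | succ n =>
      obtain ⟨e, rfl⟩ : ∃ e, d = e + 1 := ⟨d - 1, by omega⟩
      have := ih n (by simpa using h) e (by omega) a
      simp only [List.set_cons_succ, List.take_succ_cons, List.sum_cons,
        List.getD_cons_succ]
      omega

lemma count_ge_three (L : List ℕ) (i : ℕ) (h : i + 2 < L.length) (v : ℕ)
    (h0 : L.getD i 0 = v) (h1 : L.getD (i+1) 0 = v) (h2 : L.getD (i+2) 0 = v) :
    3 ≤ L.count v := by
  rw [List.getD_eq_getElem _ _ (by omega : i < L.length)] at h0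
  rw [List.getD_eq_getElem _ _ (by omega : i+1 < L.length)] at h1
  rw [List.getD_eq_getElem _ _ (by omega : i+2 < L.length)] at h2
  have e0 : L.drop i = v :: L.drop (i+1) := by
    rw [List.drop_eq_getElem_cons (by omega : i < L.length), h0]
  have e1 : L.drop (i+1) = v :: L.drop (i+2) := by
    rw [List.drop_eq_getElem_cons (by omega : i+1 < L.length), h1]
  have e2 : L.drop (i+2) = v :: L.drop (i+3) := by
    rw [List.drop_eq_getElem_cons (by omega : i+2 < L.length), h2]
  calc 3 ≤ (L.drop i).count v := by
        rw [e0, e1, e2]; simp [List.count_cons]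
    _ ≤ (L.take i).count v + (L.drop i).count v := by omega
    _ = L.count v := by rw [← List.count_append, List.take_append_drop]

lemma exists_two (L : List ℕ) (v : ℕ) : 2 ≤ L.count v →
    ∃ i j, i < j ∧ j < L.length ∧ L.getD i 0 = v ∧ L.getD j 0 = v := by
  induction L with
  | nil => simp
  | cons x t ih =>
    intro h
    rw [List.count_cons] at h
    by_cases hx : x = v
    · rw [if_pos (by simpa using hx : (x == v) = true)] at h
      have h1 : 1 ≤ t.count v := by omega
      have hv : v ∈ t := List.count_pos_iff.mp h1
      obtain ⟨j, hj, hjv⟩ := List.mem_iff_getElem.mp hv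
      exact ⟨0, j+1, by omega, by simpa using hj, by simpa using hx,
        by rw [List.getD_cons_succ, List.getD_eq_getElem _ _ hj]; exact hjv⟩
    · rw [if_neg (by simpa using hx : ¬ (x == v) = true)] at h
      have h2 : 2 ≤ t.count v := by omega
      obtain ⟨i, j, hij, hj, hi', hj'⟩ := ih h2
      exact ⟨i+1, j+1, by omega, by simpa using hj, by simpa using hi', by simpa using hj'⟩

instance : IsAntisymm ℕ (· ≥ ·) := ⟨fun _ _ h h' => le_antisymm h' h⟩

lemma dsort_sorted (M : Multiset ℕ) : (dsort M).Pairwise (· ≥ ·) := by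
  rw [dsort, List.pairwise_reverse]
  exact List.Pairwise.imp (fun h => h) (Multiset.pairwise_sort M (· ≤ ·))

lemma dsort_coe (M : Multiset ℕ) : ((dsort M : List ℕ) : Multiset ℕ) = M := by
  rw [dsort, ← Multiset.coe_reverse, List.reverse_reverse, Multiset.sort_eq]

lemma dsort_length (M : Multiset ℕ) : (dsort M).length = Multiset.card M := by
  rw [dsort, List.length_reverse, Multiset.length_sort]

lemma dsort_sum (M : Multiset ℕ) : (dsort M).sum = M.sum := by
  rw [← Multiset.sum_coe, dsort_coe]

lemma eq_dsort {L : List ℕ} {M : Multiset ℕ} (hs : L.Pairwise (· ≥ ·))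
    (hc : (L : Multiset ℕ) = M) : dsort M = L := by
  refine List.Perm.eq_of_pairwise' (dsort_sorted M) hs ?_
  rw [← Multiset.coe_eq_coe, dsort_coe, hc]

lemma dsort_count (M : Multiset ℕ) (v : ℕ) : (dsort M).count v = M.count v := by
  rw [← Multiset.coe_count, dsort_coe]


theorem adjacent_multisets_differ_in_two_entries (m : ℕ) (Z Z' : Multiset ℕ)
    (hZm : Multiset.card Z = m) (hZ'm : Multiset.card Z' = m)
    (hsum : Z.sum = Z'.sum)
    (hZ : AtMostTwice Z) (hZ' : AtMostTwice Z')
    (hdom : MDom Z Z') (hne : Z ≠ Z')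
    (hadj : ∀ Z'' : Multiset ℕ, Multiset.card Z'' = m → Z''.sum = Z.sum →
      AtMostTwice Z'' → MDom Z Z'' → MDom Z'' Z' → Z'' = Z ∨ Z'' = Z') :
    ∃ k l, k < l ∧ l < m ∧
      (dsort Z').getD k 0 = (dsort Z).getD k 0 + 1 ∧
      (dsort Z').getD l 0 + 1 = (dsort Z).getD l 0 ∧
      ∀ i, i < m → i ≠ k → i ≠ l → (dsort Z').getD i 0 = (dsort Z).getD i 0 := by
  set L := dsort Z with hLdef
  set L' := dsort Z' with hL'def
  have hsL : L.Pairwise (· ≥ ·) := dsort_sorted Z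
  have hsL' : L'.Pairwise (· ≥ ·) := dsort_sorted Z'
  have hLm : L.length = m := (dsort_length Z).trans hZm
  have hL'm : L'.length = m := (dsort_length Z').trans hZ'm
  have hls : L.sum = Z.sum := dsort_sum Z
  have hls' : L'.sum = Z'.sum := dsort_sum Z'
  have hdom' : ∀ d, (L.take d).sum ≤ (L'.take d).sum := hdom
  have hstep : ∀ d, d < m → (L.take (d+1)).sum = (L.take d).sum + L.getD d 0 :=
    fun d hd => sum_take_succ_getD L d (by omega)
  have hstep' : ∀ d, d < m → (L'.take (d+1)).sum = (L'.take d).sum + L'.getD d 0 :=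
    fun d hd => sum_take_succ_getD L' d (by omega)
  have htot : ∀ d, m ≤ d → (L.take d).sum = (L'.take d).sum := by
    intro d hd
    rw [List.take_of_length_le (by omega), List.take_of_length_le (by omega),
      hls, hls', hsum]
  have hne' : L ≠ L' := by
    intro h
    exact hne (by rw [← dsort_coe Z, ← dsort_coe Z', ← hLdef, ← hL'def, h])
  have hexists : ∃ d, (L.take d).sum < (L'.take d).sum := by
    by_contra hc
    push_neg at hc
    have hall : ∀ d, (L.take d).sum = (L'.take d).sum :=
      fun d => le_antisymm (hdom' d) (hc d)
    apply hne'
    apply List.ext_getElem (by rw [hLm, hL'm])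
    intro i hi hi'
    have h1 := hstep i (by omega)
    have h2 := hstep' i (by omega)
    rw [List.getD_eq_getElem _ _ hi] at h1
    rw [List.getD_eq_getElem _ _ hi'] at h2
    have e1 := hall i
    have e2 := hall (i+1)
    omega
  obtain ⟨d1, hd1⟩ := hexists
  have hd1m : d1 < m := by
    by_contra hc
    push_neg at hc
    have := htot d1 hc
    omega
  have hd1pos : 0 < d1 := by
    rcases Nat.eq_zero_or_pos d1 with rfl | h
    · simp at hd1
    · exact h
  -- the index k
  set k := Nat.findGreatest (fun j => (L.take j).sum = (L'.take j).sum) (d1 - 1) with hkdef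
  have hk_eq : (L.take k).sum = (L'.take k).sum :=
    Nat.findGreatest_spec (P := fun j => (L.take j).sum = (L'.take j).sum)
      (Nat.zero_le _) (by simp)
  have hk_le : k ≤ d1 - 1 :=
    Nat.findGreatest_le (P := fun j => (L.take j).sum = (L'.take j).sum) _
  have hk_max : ∀ j, k < j → j ≤ d1 - 1 → (L.take j).sum ≠ (L'.take j).sum :=
    fun j h1 h2 =>
      Nat.findGreatest_is_greatest (P := fun j => (L.take j).sum = (L'.take j).sum) h1 h2
  -- the index lm
  have hex2 : ∃ e, d1 ≤ e ∧ (L.take (e+1)).sum = (L'.take (e+1)).sum :=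
    ⟨m - 1, by omega, by rw [htot _ (by omega)]⟩
  set lm := Nat.find hex2 with hlmdef
  have hlm1 : d1 ≤ lm := (Nat.find_spec hex2).1
  have hlm_eq : (L.take (lm+1)).sum = (L'.take (lm+1)).sum := (Nat.find_spec hex2).2
  have hlm_min : ∀ j, j < lm → d1 ≤ j → (L.take (j+1)).sum ≠ (L'.take (j+1)).sum :=
    fun j h1 h2 he => Nat.find_min hex2 h1 ⟨h2, he⟩
  have hlm_m : lm < m := by
    have : lm ≤ m - 1 := Nat.find_min' hex2 ⟨by omega, by rw [htot _ (by omega)]⟩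
    omega
  have hklm : k < lm := by omega
  have hstrict : ∀ d, k < d → d ≤ lm → (L.take d).sum < (L'.take d).sum := by
    intro d h1 h2
    rcases lt_trichotomy d d1 with h | h | h
    · exact lt_of_le_of_ne (hdom' d) (hk_max d h1 (by omega))
    · exact h ▸ hd1
    · refine lt_of_le_of_ne (hdom' d) ?_
      have := hlm_min (d-1) (by omega) (by omega)
      rwa [show d - 1 + 1 = d by omega] at this
  have hkm : k < m := by omega
  have h1 : L.getD k 0 + 1 ≤ L'.getD k 0 := by
    have e1 := hstep k hkm
    have e2 := hstep' k hkm
    have := hstrict (k+1) (by omega) (by omega)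
    omega
  have h2 : L'.getD lm 0 + 1 ≤ L.getD lm 0 := by
    have e1 := hstep lm hlm_m
    have e2 := hstep' lm hlm_m
    have := hstrict lm hklm (le_refl _)
    omega
  have hsorted_idx : ∀ i j : ℕ, i ≤ j → j < m → L.getD j 0 ≤ L.getD i 0 :=
    fun i j hij hj => sorted_ge_getD hsL hij (by omega)
  have hsorted_idx' : ∀ i j : ℕ, i ≤ j → j < m → L'.getD j 0 ≤ L'.getD i 0 :=
    fun i j hij hj => sorted_ge_getD hsL' hij (by omega)
  have hA : 0 < k → L.getD k 0 + 1 ≤ L.getD (k-1) 0 := by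
    intro hk0
    have e1 := hstep (k-1) (by omega)
    have e2 := hstep' (k-1) (by omega)
    rw [show k - 1 + 1 = k by omega] at e1 e2
    have h3 := hdom' (k-1)
    have h4 : L'.getD k 0 ≤ L'.getD (k-1) 0 := hsorted_idx' (k-1) k (by omega) hkm
    omega
  have hBpos : 1 ≤ L.getD lm 0 := by omega
  have hB : lm + 1 < m → L.getD (lm+1) 0 + 1 ≤ L.getD lm 0 := by
    intro hm2
    have e1 := hstep (lm+1) hm2
    have e2 := hstep' (lm+1) hm2
    rw [show lm + 1 + 1 = lm + 2 by omega] at e1 e2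
    have h3 := hdom' (lm+2)
    have h4 : L'.getD (lm+1) 0 ≤ L'.getD lm 0 := hsorted_idx' lm (lm+1) (by omega) hm2
    omega
  have hcountZ : ∀ v, L.count v ≤ 2 :=
    fun v => le_of_eq_of_le (dsort_count Z v) (hZ v)
  have hcountZ' : ∀ v, L'.count v ≤ 2 :=
    fun v => le_of_eq_of_le (dsort_count Z' v) (hZ' v)
  have hc1 : L.count (L.getD k 0 + 1) ≤ 1 := by
    by_contra hc
    push_neg at hc
    obtain ⟨i, j, hij, hjlen, hiv, hjv⟩ := exists_two L (L.getD k 0 + 1) (by omega)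
    have hjm : j < m := by omega
    have hidx : ∀ t, t < m → L.getD t 0 = L.getD k 0 + 1 → t < k := by
      intro t ht hv
      by_contra hcc
      push_neg at hcc
      have := hsorted_idx k t hcc ht
      omega
    have hik : i < k := hidx i (by omega) hiv
    have hjk : j < k := hidx j hjm hjv
    have hk0 : 0 < k := by omega
    have hAk := hA hk0
    have hLk1 : L.getD (k-1) 0 = L.getD k 0 + 1 := by
      have := hsorted_idx j (k-1) (by omega) (by omega)
      omega
    have hLk2 : L.getD (k-2) 0 = L.getD k 0 + 1 := by
      have t1 := hsorted_idx i (k-2) (by omega) (by omega)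
      have t2 := hsorted_idx (k-2) (k-1) (by omega) (by omega)
      omega
    have e1 := hstep (k-1) (by omega)
    have e2 := hstep' (k-1) (by omega)
    rw [show k - 1 + 1 = k by omega] at e1 e2
    have hd3 := hdom' (k-1)
    have hs1 : L'.getD k 0 ≤ L'.getD (k-1) 0 := hsorted_idx' (k-1) k (by omega) hkm
    have hv1 : L'.getD (k-1) 0 = L.getD k 0 + 1 := by omega
    have hv0 : L'.getD k 0 = L.getD k 0 + 1 := by omega
    have e3 := hstep (k-2) (by omega)
    have e4 := hstep' (k-2) (by omega)
    rw [show k - 2 + 1 = k - 1 by omega] at e3 e4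
    have hd4 := hdom' (k-2)
    have hs2 : L'.getD (k-1) 0 ≤ L'.getD (k-2) 0 := hsorted_idx' (k-2) (k-1) (by omega) (by omega)
    have hv2 : L'.getD (k-2) 0 = L.getD k 0 + 1 := by omega
    have h3ct : 3 ≤ L'.count (L.getD k 0 + 1) := by
      refine count_ge_three L' (k-2) (by omega) _ hv2 ?_ ?_
      · rw [show k-2+1 = k-1 by omega]; exact hv1
      · rw [show k-2+2 = k by omega]; exact hv0
    have := hcountZ' (L.getD k 0 + 1)
    omega
  have hc2 : L.count (L.getD lm 0 - 1) ≤ 1 := by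
    by_contra hc
    push_neg at hc
    obtain ⟨i, j, hij, hjlen, hiv, hjv⟩ := exists_two L (L.getD lm 0 - 1) (by omega)
    have hjm : j < m := by omega
    have hidx : ∀ t, t < m → L.getD t 0 = L.getD lm 0 - 1 → lm < t := by
      intro t ht hv
      by_contra hcc
      push_neg at hcc
      have := hsorted_idx t lm hcc hlm_m
      omega
    have hilm : lm < i := hidx i (by omega) hiv
    have hjlm : lm < j := hidx j hjm hjv
    have hm2 : lm + 2 < m := by omega
    have hBl := hB (by omega)
    have hL1 : L.getD (lm+1) 0 = L.getD lm 0 - 1 := by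
      have := hsorted_idx (lm+1) i (by omega) (by omega)
      omega
    have hL2 : L.getD (lm+2) 0 = L.getD lm 0 - 1 := by
      have t1 := hsorted_idx (lm+2) j (by omega) hjm
      have t2 := hsorted_idx (lm+1) (lm+2) (by omega) (by omega)
      omega
    have e1 := hstep (lm+1) (by omega)
    have e2 := hstep' (lm+1) (by omega)
    rw [show lm + 1 + 1 = lm + 2 by omega] at e1 e2
    have hd3 := hdom' (lm+2)
    have hs1 : L'.getD (lm+1) 0 ≤ L'.getD lm 0 := hsorted_idx' lm (lm+1) (by omega) (by omega)
    have hv1 : L'.getD (lm+1) 0 = L.getD lm 0 - 1 := by omega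
    have hv0 : L'.getD lm 0 = L.getD lm 0 - 1 := by omega
    have e3 := hstep (lm+2) (by omega)
    have e4 := hstep' (lm+2) (by omega)
    rw [show lm + 2 + 1 = lm + 3 by omega] at e3 e4
    have hd4 := hdom' (lm+3)
    have hs2 : L'.getD (lm+2) 0 ≤ L'.getD (lm+1) 0 := hsorted_idx' (lm+1) (lm+2) (by omega) (by omega)
    have hv2 : L'.getD (lm+2) 0 = L.getD lm 0 - 1 := by omega
    have h3ct : 3 ≤ L'.count (L.getD lm 0 - 1) :=
      count_ge_three L' lm (by omega) _ hv0 hv1 hv2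
    have := hcountZ' (L.getD lm 0 - 1)
    omega
  -- the modified list
  set a := L.getD k 0 + 1 with hadef
  set b := L.getD lm 0 - 1 with hbdef
  set M0 := (L.set k a).set lm b with hMdef
  have hkL : k < L.length := by omega
  have hlmL : lm < L.length := by omega
  have hM0len : M0.length = m := by
    rw [hMdef, List.length_set, List.length_set, hLm]
  have hMget : ∀ i, M0.getD i 0 = if i = lm then b else if i = k then a else L.getD i 0 := by
    intro i
    by_cases hi1 : i = lm
    · rw [if_pos hi1, hi1, hMdef]
      exact getD_set_self (by rw [List.length_set]; exact hlmL) b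
    · rw [if_neg hi1, hMdef, getD_set_ne (fun h => hi1 h.symm) b]
      by_cases hi2 : i = k
      · rw [if_pos hi2, hi2]
        exact getD_set_self hkL a
      · rw [if_neg hi2, getD_set_ne (fun h => hi2 h.symm) a]
  have hkLk : L.getD lm 0 ≤ L.getD k 0 := hsorted_idx k lm (le_of_lt hklm) hlm_m
  have hMsort : M0.Pairwise (· ≥ ·) := by
    apply sorted_ge_of_getD
    intro i j hij hjlen
    have hjm' : j < m := by omega
    rw [hMget i, hMget j]
    by_cases hjlm : j = lm
    · rw [if_pos hjlm, if_neg (by omega : ¬ i = lm)]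
      by_cases hik : i = k
      · rw [if_pos hik]; omega
      · rw [if_neg hik]
        have := hsorted_idx i lm (by omega) hlm_m
        omega
    · rw [if_neg hjlm]
      by_cases hjk : j = k
      · rw [if_pos hjk, if_neg (by omega : ¬ i = lm), if_neg (by omega : ¬ i = k)]
        have hk0 : 0 < k := by omega
        have t1 := hA hk0
        have t2 := hsorted_idx i (k-1) (by omega) (by omega)
        omega
      · rw [if_neg hjk]
        by_cases hilm : i = lm
        · rw [if_pos hilm]
          have hlt : lm + 1 < m := by omega
          have t1 := hB hlt
          have t2 := hsorted_idx (lm+1) j (by omega) hjm'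
          omega
        · rw [if_neg hilm]
          by_cases hik : i = k
          · rw [if_pos hik]
            have := hsorted_idx k j (by omega) hjm'
            omega
          · rw [if_neg hik]
            exact hsorted_idx i j (by omega) hjm'
  have hMcnt : ∀ v, M0.count v ≤ 2 := by
    intro v
    have e2 := count_set_getD (L.set k a) lm (by rw [List.length_set]; exact hlmL) b v
    rw [← hMdef, getD_set_ne (show k ≠ lm by omega) a] at e2
    have e1 := count_set_getD L k hkL a v
    have hzc := hcountZ v
    by_cases hv1 : v = a
    · subst hv1
      split_ifs at e1 e2 <;> omega
    · by_cases hv2 : v = b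
      · subst hv2
        split_ifs at e1 e2 <;> omega
      · split_ifs at e1 e2 <;> omega
  -- partial sums of M0
  have hQlow : ∀ d, d ≤ k → (M0.take d).sum = (L.take d).sum := by
    intro d hd
    rw [hMdef, take_set_ge _ lm d (by omega) b, take_set_ge _ k d hd a]
  have hQmid : ∀ d, k < d → d ≤ lm → (M0.take d).sum = (L.take d).sum + 1 := by
    intro d hd1' hd2'
    have t1 : M0.take d = (L.set k a).take d := by
      rw [hMdef]; exact take_set_ge _ lm d hd2' b
    have t2 := sum_take_set_lt L k hkL d hd1' a
    rw [t1]
    omega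
  have hQhi : ∀ d, lm < d → (M0.take d).sum = (L.take d).sum := by
    intro d hd
    have t1 := sum_take_set_lt (L.set k a) lm (by rw [List.length_set]; exact hlmL) d hd b
    have t2 := sum_take_set_lt L k hkL d (by omega) a
    have t3 : (L.set k a).getD lm 0 = L.getD lm 0 := getD_set_ne (by omega) a
    rw [← hMdef] at t1
    omega
  have hdsM : dsort (↑M0) = M0 := eq_dsort hMsort rfl
  have hQ3 : ∀ d, (L.take d).sum ≤ (M0.take d).sum := by
    intro d
    rcases le_or_gt d k with h | h
    · rw [hQlow d h]
    · rcases le_or_gt d lm with h2' | h2'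
      · rw [hQmid d h h2']; omega
      · rw [hQhi d h2']
  have hQ4 : ∀ d, (M0.take d).sum ≤ (L'.take d).sum := by
    intro d
    rcases le_or_gt d k with h | h
    · rw [hQlow d h]; exact hdom' d
    · rcases le_or_gt d lm with h2' | h2'
      · rw [hQmid d h h2']
        have := hstrict d h h2'
        omega
      · rw [hQhi d h2']; exact hdom' d
  have hMdomL : MDom Z ↑M0 := by
    intro d
    show (List.take d (dsort Z)).sum ≤ (List.take d (dsort ↑M0)).sum
    rw [hdsM, ← hLdef]
    exact hQ3 d
  have hMdomL' : MDom (↑M0) Z' := by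
    intro d
    show (List.take d (dsort ↑M0)).sum ≤ (List.take d (dsort Z')).sum
    rw [hdsM, ← hL'def]
    exact hQ4 d
  have hcard : Multiset.card (↑M0 : Multiset ℕ) = m := by
    rw [Multiset.coe_card, hM0len]
  have hsumM : (↑M0 : Multiset ℕ).sum = Z.sum := by
    rw [Multiset.sum_coe]
    have t1 : M0.take m = M0 := List.take_of_length_le (by omega)
    have t2 : L.take m = L := List.take_of_length_le (by omega)
    have t3 := hQhi m hlm_m
    rw [t1, t2] at t3
    rw [t3, hLdef, dsort_sum]
  have hAM : AtMostTwice (↑M0 : Multiset ℕ) := by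
    intro v
    rw [Multiset.coe_count]
    exact hMcnt v
  rcases hadj (↑M0) hcard hsumM hAM hMdomL hMdomL' with hZZ | hZZ'
  · exfalso
    have hLM : L = M0 := by rw [hLdef, ← hZZ, hdsM]
    have := hMget k
    rw [← hLM] at this
    rw [if_neg (by omega : ¬ k = lm), if_pos rfl] at this
    omega
  · have hL'M : L' = M0 := by rw [hL'def, ← hZZ', hdsM]
    refine ⟨k, lm, hklm, hlm_m, ?_, ?_, ?_⟩
    · rw [hL'M, hMget k, if_neg (by omega : ¬ k = lm), if_pos rfl]
    · rw [hL'M, hMget lm, if_pos rfl]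
      omega
    · intro i him hik hilm
      rw [hL'M, hMget i, if_neg hilm, if_neg hik]
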